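/- There is a bijection between the set of layered matchings of [n] (partitions of [n] avoiding 13/2 and 123) and the set of permutations of [n] avoiding the patterns 123, 132, and 213, given by mapping σ = B₁/B₂/.../B_k to the permutation obtained by listing the blocks in reverse order B_k B_{k−1} ... B₁ with elements of each block in increasing order. -/

import Mathlib

open Finset

structure SetPartition (n : ℕ) where
  blocks : Finset (Finset ℕ)
  nonempty_mem : ∀ B ∈ blocks, B.Nonempty
  disj : ∀ B ∈ blocks, ∀ C ∈ blocks, B ≠ C → Disjoint B C
  cover : blocks.sup id = Finset.Icc 1 n

/-- `σ` contains the pattern `π`: there is an order-preserving choice of elements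
and an injective assignment of blocks of `π` to distinct blocks of `σ`. -/
def SetPartition.Contains {n k : ℕ} (σ : SetPartition n) (π : SetPartition k) : Prop :=
  ∃ f : ℕ → ℕ, StrictMonoOn f (Finset.Icc 1 k : Set ℕ) ∧
    ∃ g : Finset ℕ → Finset ℕ,
      (∀ B ∈ π.blocks, g B ∈ σ.blocks) ∧
      (∀ B ∈ π.blocks, ∀ C ∈ π.blocks, g B = g C → B = C) ∧
      (∀ B ∈ π.blocks, ∀ x ∈ B, f x ∈ g B)

def SetPartition.Avoids {n k : ℕ} (σ : SetPartition n) (π : SetPartition k) : Prop :=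
  ¬ σ.Contains π

def pat1_2_3 : SetPartition 3 := ⟨{{1}, {2}, {3}}, by decide, by decide, by decide⟩
def pat1_23 : SetPartition 3 := ⟨{{1}, {2, 3}}, by decide, by decide, by decide⟩
def pat12_3 : SetPartition 3 := ⟨{{1, 2}, {3}}, by decide, by decide, by decide⟩
def pat13_2 : SetPartition 3 := ⟨{{1, 3}, {2}}, by decide, by decide, by decide⟩
def pat123 : SetPartition 3 := ⟨{{1, 2, 3}}, by decide, by decide, by decide⟩

/-- A partition is layered when every block is an interval. -/
def SetPartition.Layered {n : ℕ} (σ : SetPartition n) : Prop :=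
  ∀ B ∈ σ.blocks, ∃ a b : ℕ, B = Finset.Icc a b

/-- Two lists of the same length are order isomorphic. -/
def OrderIsoList (s p : List ℕ) : Prop :=
  ∃ h : s.length = p.length,
    ∀ i j : Fin s.length,
      (s.get i < s.get j ↔ p.get (Fin.cast h i) < p.get (Fin.cast h j))

/-- The word `w` avoids the pattern `p`: no subsequence of `w` is
order isomorphic to `p`. -/
def AvoidsWord (w p : List ℕ) : Prop :=
  ¬ ∃ s : List ℕ, s.Sublist w ∧ OrderIsoList s p


def psize (b : Bool) : ℕ := if b then 2 else 1

def csum : List Bool → ℕ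
  | [] => 0
  | b :: t => psize b + csum t

def wordAux : ℕ → List Bool → List ℕ
  | _, [] => []
  | n, false :: t => n :: wordAux (n-1) t
  | n, true :: t => (n-1) :: n :: wordAux (n-2) t

def topBlock (n : ℕ) (b : Bool) : Finset ℕ := Finset.Icc (n + 1 - psize b) n

def blocksAux : ℕ → List Bool → Finset (Finset ℕ)
  | _, [] => ∅
  | n, b :: t => insert (topBlock n b) (blocksAux (n - psize b) t)

lemma psize_pos (b : Bool) : 1 ≤ psize b := by cases b <;> simp [psize]

lemma psize_le (b : Bool) : psize b ≤ 2 := by cases b <;> simp [psize]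

lemma mem_wordAux {c : List Bool} : ∀ {n z : ℕ}, csum c ≤ n →
    (z ∈ wordAux n c ↔ n - csum c < z ∧ z ≤ n) := by
  induction c with
  | nil => intro n z h; simp [wordAux, csum]; try omega
  | cons b t ih =>
    intro n z h
    have h1 := psize_pos b
    have h2 := psize_le b
    cases b with
    | false =>
      have hc : csum (false :: t) = 1 + csum t := by simp [csum, psize]
      have : csum t ≤ n - 1 := by omega
      simp only [wordAux, List.mem_cons, ih this]
      omega
    | true =>
      have hc : csum (true :: t) = 2 + csum t := by simp [csum, psize]
      have : csum t ≤ n - 2 := by omega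
      simp only [wordAux, List.mem_cons, ih this]
      omega

lemma nodup_wordAux {c : List Bool} : ∀ {n : ℕ}, csum c ≤ n → (wordAux n c).Nodup := by
  induction c with
  | nil => intro n h; simp [wordAux]
  | cons b t ih =>
    intro n h
    cases b with
    | false =>
      have hc : csum (false :: t) = 1 + csum t := by simp [csum, psize]
      have h' : csum t ≤ n - 1 := by omega
      simp only [wordAux, List.nodup_cons]
      refine ⟨fun hm => ?_, ih h'⟩
      have := (mem_wordAux h').mp hm
      omega
    | true =>
      have hc : csum (true :: t) = 2 + csum t := by simp [csum, psize]
      have h' : csum t ≤ n - 2 := by omega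
      have hn : 2 ≤ n := by omega
      simp only [wordAux, List.nodup_cons, List.mem_cons]
      refine ⟨?_, fun hm => ?_, ih h'⟩
      · rintro (h | hm)
        · omega
        · have := (mem_wordAux h').mp hm; omega
      · have := (mem_wordAux h').mp hm; omega

lemma mem_blocksAux {c : List Bool} : ∀ {n : ℕ} {B : Finset ℕ}, csum c ≤ n →
    B ∈ blocksAux n c → ∀ z ∈ B, n - csum c < z ∧ z ≤ n := by
  induction c with
  | nil => intro n B h hB; simp [blocksAux] at hB
  | cons b t ih =>
    intro n B h hB z hz
    have h1 := psize_pos b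
    have h2 := psize_le b
    have hc : csum (b :: t) = psize b + csum t := rfl
    rw [blocksAux, Finset.mem_insert] at hB
    rcases hB with rfl | hB
    · rw [topBlock, Finset.mem_Icc] at hz; omega
    · have h' : csum t ≤ n - psize b := by omega
      have := ih h' hB z hz
      omega

lemma blocksAux_sup {c : List Bool} : ∀ {n : ℕ}, csum c ≤ n →
    (blocksAux n c).sup id = Finset.Icc (n - csum c + 1) n := by
  induction c with
  | nil => intro n h; ext z; simp [blocksAux, csum, Finset.mem_Icc]; try omega
  | cons b t ih =>
    intro n h
    have h1 := psize_pos b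
    have h2 := psize_le b
    have hc : csum (b :: t) = psize b + csum t := rfl
    have h' : csum t ≤ n - psize b := by omega
    rw [blocksAux, Finset.sup_insert, ih h']
    ext z
    simp only [id, Finset.mem_union, Finset.mem_Icc, topBlock, Finset.sup_eq_union]
    omega

lemma blocksAux_nonempty {c : List Bool} : ∀ {n : ℕ} {B : Finset ℕ}, csum c ≤ n →
    B ∈ blocksAux n c → B.Nonempty := by
  induction c with
  | nil => intro n B h hB; simp [blocksAux] at hB
  | cons b t ih =>
    intro n B h hB
    have h1 := psize_pos b
    have h2 := psize_le b
    have hc : csum (b :: t) = psize b + csum t := rfl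
    rw [blocksAux, Finset.mem_insert] at hB
    rcases hB with rfl | hB
    · rw [topBlock]; refine Finset.nonempty_Icc.mpr (by omega)
    · exact ih (by omega) hB

lemma blocksAux_disj {c : List Bool} : ∀ {n : ℕ} {B C : Finset ℕ}, csum c ≤ n →
    B ∈ blocksAux n c → C ∈ blocksAux n c → B ≠ C → Disjoint B C := by
  induction c with
  | nil => intro n B C h hB; simp [blocksAux] at hB
  | cons b t ih =>
    intro n B C h hB hC hne
    have h1 := psize_pos b
    have h2 := psize_le b
    have hc : csum (b :: t) = psize b + csum t := rfl
    have h' : csum t ≤ n - psize b := by omega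
    rw [blocksAux, Finset.mem_insert] at hB hC
    rcases hB with rfl | hB <;> rcases hC with rfl | hC
    · exact absurd rfl hne
    · rw [Finset.disjoint_left]
      intro z hz hz'
      rw [topBlock, Finset.mem_Icc] at hz
      have := mem_blocksAux h' hC z hz'
      omega
    · rw [Finset.disjoint_right]
      intro z hz hz'
      rw [topBlock, Finset.mem_Icc] at hz
      have := mem_blocksAux h' hB z hz'
      omega
    · exact ih h' hB hC hne

lemma blocksAux_card {c : List Bool} : ∀ {n : ℕ} {B : Finset ℕ}, csum c ≤ n →
    B ∈ blocksAux n c → B.card ≤ 2 := by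
  induction c with
  | nil => intro n B h hB; simp [blocksAux] at hB
  | cons b t ih =>
    intro n B h hB
    have h1 := psize_pos b
    have h2 := psize_le b
    have hc : csum (b :: t) = psize b + csum t := rfl
    rw [blocksAux, Finset.mem_insert] at hB
    rcases hB with rfl | hB
    · rw [topBlock, Nat.card_Icc]; omega
    · exact ih (by omega) hB

lemma blocksAux_layered {c : List Bool} : ∀ {n : ℕ} {B : Finset ℕ},
    B ∈ blocksAux n c → ∃ a b : ℕ, B = Finset.Icc a b := by
  induction c with
  | nil => intro n B hB; simp [blocksAux] at hB
  | cons b t ih =>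
    intro n B hB
    rw [blocksAux, Finset.mem_insert] at hB
    rcases hB with rfl | hB
    · exact ⟨_, _, rfl⟩
    · exact ih hB

def Qprop (w : List ℕ) : Prop :=
  ∀ (i j : ℕ) (hi : i < w.length) (hj : j < w.length), i + 2 ≤ j → w[j] < w[i]

lemma Qprop_tail {a : ℕ} {w : List ℕ} (h : Qprop (a :: w)) : Qprop w := by
  intro i j hi hj hij
  have := h (i+1) (j+1) (by simpa using hi) (by simpa using hj) (by omega)
  simpa using this

lemma Qprop_cons {a : ℕ} {w : List ℕ}
    (h1 : ∀ (j : ℕ) (hj : j < w.length), 1 ≤ j → w[j] < a)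
    (h2 : Qprop w) : Qprop (a :: w) := by
  intro i j hi hj hij
  match i, j, hij with
  | 0, j+1, _ =>
    have hj' : j < w.length := by simpa using hj
    simpa using h1 j hj' (by omega)
  | i+1, j+1, _ =>
    have hi' : i < w.length := by simpa using hi
    have hj' : j < w.length := by simpa using hj
    simpa using h2 i j hi' hj' (by omega)

lemma iso123 {a b c : ℕ} (h1 : a < b) (h2 : b < c) : OrderIsoList [a,b,c] [1,2,3] := by
  refine ⟨rfl, fun i j => ?_⟩
  fin_cases i <;> fin_cases j <;> simp [List.get] <;> omega

lemma iso132 {a b c : ℕ} (h1 : a < c) (h2 : c < b) : OrderIsoList [a,b,c] [1,3,2] := by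
  refine ⟨rfl, fun i j => ?_⟩
  fin_cases i <;> fin_cases j <;> simp [List.get] <;> omega

lemma iso213 {a b c : ℕ} (h1 : b < a) (h2 : a < c) : OrderIsoList [a,b,c] [2,1,3] := by
  refine ⟨rfl, fun i j => ?_⟩
  fin_cases i <;> fin_cases j <;> simp [List.get] <;> omega

lemma sub3 {a b c : ℕ} {w : List ℕ} (hs : [a,b,c].Sublist w) (hQ : Qprop w) : c < a := by
  obtain ⟨is, his, hp⟩ := List.sublist_eq_map_getElem hs
  have hlen : is.length = 3 := by
    have := congrArg List.length his; simpa using this.symm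
  obtain ⟨i, j, k, rfl⟩ := List.length_eq_three.mp hlen
  have h3 : a = w.get i ∧ b = w.get j ∧ c = w.get k := by simpa using his
  have hik : (i : ℕ) < k ∧ (i : ℕ) < j ∧ (j : ℕ) < k := by
    have := hp
    simp [List.pairwise_cons] at this
    exact ⟨this.1.2, this.1.1, this.2⟩
  have := hQ i k i.isLt k.isLt (by omega)
  rw [h3.1, h3.2.2]
  simpa [List.get_eq_getElem] using this

lemma nodup_getElem_ne {w : List ℕ} (hnd : w.Nodup) {i j : ℕ} (hi : i < w.length)
    (hj : j < w.length) (hij : i ≠ j) : w[i] ≠ w[j] := by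
  intro h
  have := (hnd.get_inj_iff (i := ⟨i, hi⟩) (j := ⟨j, hj⟩)).mp (by simpa using h)
  exact hij (by simpa [Fin.ext_iff] using this)

lemma avoids_of_Q {w : List ℕ} (hQ : Qprop w) :
    AvoidsWord w [1,2,3] ∧ AvoidsWord w [1,3,2] ∧ AvoidsWord w [2,1,3] := by
  refine ⟨?_, ?_, ?_⟩ <;>
  · rintro ⟨s, hsub, hlen, hiso⟩
    obtain ⟨a, b, c, rfl⟩ := List.length_eq_three.mp (by simpa using hlen)
    have h1 := hiso ⟨0, by simp⟩ ⟨2, by simp⟩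
    simp [List.get] at h1
    have := sub3 hsub hQ
    omega

lemma Q_of_avoids {w : List ℕ} (hnd : w.Nodup)
    (h1 : AvoidsWord w [1,2,3]) (h2 : AvoidsWord w [1,3,2]) (h3 : AvoidsWord w [2,1,3]) :
    Qprop w := by
  intro i j hi hj hij
  by_contra hlt
  push_neg at hlt
  have hm : i + 1 < w.length := by omega
  have hxy : w[i] < w[j] :=
    lt_of_le_of_ne hlt (nodup_getElem_ne hnd hi hj (by omega))
  have hsub : [w[i], w[i+1], w[j]].Sublist w := by
    have hp : List.Pairwise (fun x1 x2 : Fin w.length => (x1 : ℕ) < (x2 : ℕ))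
        [⟨i, hi⟩, ⟨i+1, hm⟩, ⟨j, hj⟩] := by
      simp [List.pairwise_cons]; omega
    have := List.map_getElem_sublist hp
    simpa using this
  have hbx : w[i+1] ≠ w[i] := nodup_getElem_ne hnd hm hi (by omega)
  have hby : w[i+1] ≠ w[j] := nodup_getElem_ne hnd hm hj (by omega)
  rcases lt_trichotomy w[i+1] w[i] with h | h | h
  · exact h3 ⟨_, hsub, iso213 h hxy⟩
  · exact absurd h hbx
  · rcases lt_trichotomy w[i+1] w[j] with h' | h' | h'
    · exact h1 ⟨_, hsub, iso123 h h'⟩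
    · exact absurd h' hby
    · exact h2 ⟨_, hsub, iso132 hxy h'⟩

lemma Q_wordAux {c : List Bool} : ∀ {n : ℕ}, csum c ≤ n → Qprop (wordAux n c) := by
  induction c with
  | nil => intro n h i j hi hj hij; simp [wordAux] at hi
  | cons b t ih =>
    intro n h
    cases b with
    | false =>
      have hc : csum (false :: t) = 1 + csum t := by simp [csum, psize]
      have h' : csum t ≤ n - 1 := by omega
      rw [wordAux]
      refine Qprop_cons (fun j hj _ => ?_) (ih h')
      have hm : (wordAux (n-1) t)[j] ∈ wordAux (n-1) t := List.getElem_mem hj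
      have := (mem_wordAux h').mp hm
      omega
    | true =>
      have hc : csum (true :: t) = 2 + csum t := by simp [csum, psize]
      have h' : csum t ≤ n - 2 := by omega
      have hn : 2 ≤ n := by omega
      rw [wordAux]
      refine Qprop_cons (fun j hj hj1 => ?_) (Qprop_cons (fun j hj _ => ?_) (ih h'))
      · match j, hj1 with
        | j+1, _ =>
          have hj' : j < (wordAux (n-2) t).length := by simpa using hj
          have hm : (wordAux (n-2) t)[j] ∈ wordAux (n-2) t := List.getElem_mem hj'
          have := (mem_wordAux h').mp hm
          simp only [List.getElem_cons_succ]
          omega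
      · have hm : (wordAux (n-2) t)[j] ∈ wordAux (n-2) t := List.getElem_mem hj
        have := (mem_wordAux h').mp hm
        omega

lemma csum_cons (b : Bool) (t : List Bool) : csum (b :: t) = psize b + csum t := rfl

lemma csum_eq_zero {c : List Bool} (h : csum c = 0) : c = [] := by
  cases c with
  | nil => rfl
  | cons b t => have := psize_pos b; rw [csum_cons] at h; omega

lemma word_surj : ∀ n (w : List ℕ), w.Nodup → w.toFinset = Finset.Icc 1 n → Qprop w →
    ∃ c : List Bool, csum c = n ∧ wordAux n c = w := by
  intro n
  induction n using Nat.strong_induction_on with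
  | _ n ih =>
    intro w hnd htf hQ
    have hmem : ∀ z, z ∈ w ↔ 1 ≤ z ∧ z ≤ n := by
      intro z
      rw [← List.mem_toFinset, htf, Finset.mem_Icc]
    rcases Nat.eq_zero_or_pos n with rfl | hn
    · refine ⟨[], rfl, ?_⟩
      cases w with
      | nil => rfl
      | cons a t => have := (hmem a).mp (by simp); omega
    · have hnw : n ∈ w := (hmem n).mpr ⟨hn, le_rfl⟩
      cases w with
      | nil => simp at hnw
      | cons a t =>
        have hat : a ∉ t := (List.nodup_cons.mp hnd).1
        have hndt : t.Nodup := (List.nodup_cons.mp hnd).2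
        have han : 1 ≤ a ∧ a ≤ n := (hmem a).mp (List.mem_cons_self)
        by_cases ha : a = n
        · have htf' : t.toFinset = Finset.Icc 1 (n-1) := by
            ext z
            rw [List.mem_toFinset, Finset.mem_Icc]
            constructor
            · intro hz
              have h1 := (hmem z).mp (List.mem_cons_of_mem _ hz)
              have h2 : z ≠ a := fun h => hat (h ▸ hz)
              omega
            · intro hz
              have h1 : z ∈ a :: t := (hmem z).mpr ⟨hz.1, by omega⟩
              rcases List.mem_cons.mp h1 with h | h
              · omega
              · exact h
          obtain ⟨c', hc', hw'⟩ := ih (n-1) (by omega) t hndt htf' (Qprop_tail hQ)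
          refine ⟨false :: c', by rw [csum_cons]; simp [psize]; omega, ?_⟩
          rw [wordAux, hw', ha]
        · have hnt : n ∈ t := by
            rcases List.mem_cons.mp hnw with h | h
            · exact absurd h.symm ha
            · exact h
          cases t with
          | nil => simp at hnt
          | cons b t' =>
            have hn2 : 2 ≤ n := by
              rcases Nat.lt_or_ge a n with h | h
              · omega
              · omega
            have hbt : b ∉ t' := (List.nodup_cons.mp hndt).1
            have hb : b = n := by
              by_contra hbn
              have hnt' : n ∈ t' := by
                rcases List.mem_cons.mp hnt with h | h
                · exact absurd h.symm hbn
                · exact h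
              obtain ⟨j, hj, hjv⟩ := List.mem_iff_getElem.mp hnt'
              have hq := hQ 0 (j+2) (by simp) (by simp; omega) (by omega)
              simp only [List.getElem_cons_zero, List.getElem_cons_succ] at hq
              rw [hjv] at hq
              omega
            have ha' : a = n - 1 := by
              have hn1 : n - 1 ∈ a :: b :: t' := (hmem _).mpr ⟨by omega, by omega⟩
              rcases List.mem_cons.mp hn1 with h | h
              · exact h.symm
              rcases List.mem_cons.mp h with h | h
              · omega
              · obtain ⟨j, hj, hjv⟩ := List.mem_iff_getElem.mp h
                have hq := hQ 0 (j+2) (by simp) (by simp; omega) (by omega)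
                simp only [List.getElem_cons_zero, List.getElem_cons_succ] at hq
                rw [hjv] at hq
                omega
            have htf' : t'.toFinset = Finset.Icc 1 (n-2) := by
              ext z
              rw [List.mem_toFinset, Finset.mem_Icc]
              constructor
              · intro hz
                have h1 := (hmem z).mp
                  (List.mem_cons_of_mem _ (List.mem_cons_of_mem _ hz))
                have h2 : z ≠ a := fun h => hat (h ▸ List.mem_cons_of_mem _ hz)
                have h3 : z ≠ b := fun h => hbt (h ▸ hz)
                omega
              · intro hz
                have h1 : z ∈ a :: b :: t' := (hmem z).mpr ⟨hz.1, by omega⟩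
                rcases List.mem_cons.mp h1 with h | h
                · omega
                rcases List.mem_cons.mp h with h | h
                · omega
                · exact h
            obtain ⟨c', hc', hw'⟩ := ih (n-2) (by omega) t'
              (List.nodup_cons.mp hndt).2 htf' (Qprop_tail (Qprop_tail hQ))
            refine ⟨true :: c', by rw [csum_cons]; simp [psize]; omega, ?_⟩
            rw [wordAux, hw', ha', hb]

lemma blocks_surj : ∀ n (σ : SetPartition n), σ.Layered → (∀ B ∈ σ.blocks, B.card ≤ 2) →
    ∃ c : List Bool, csum c = n ∧ blocksAux n c = σ.blocks := by
  intro n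
  induction n using Nat.strong_induction_on with
  | _ n ih =>
    intro σ hlay hcard
    rcases Nat.eq_zero_or_pos n with rfl | hn
    · refine ⟨[], rfl, ?_⟩
      rw [blocksAux]
      symm
      rw [Finset.eq_empty_iff_forall_notMem]
      intro B hB
      obtain ⟨z, hz⟩ := σ.nonempty_mem B hB
      have hsub : B ⊆ σ.blocks.sup id := Finset.le_sup (f := id) hB
      have := hsub hz
      rw [σ.cover] at this
      simp at this
    · have hnn : n ∈ σ.blocks.sup id := by
        rw [σ.cover]; exact Finset.mem_Icc.mpr ⟨hn, le_rfl⟩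
      obtain ⟨B, hB, hnB⟩ := Finset.mem_sup.mp hnn
      obtain ⟨a, b0, hab⟩ := hlay B hB
      have hBsub : B ⊆ Finset.Icc 1 n := by
        rw [← σ.cover]; exact Finset.le_sup (f := id) hB
      have hnB' : n ∈ B := hnB
      have h1 : a ≤ n ∧ n ≤ b0 := by rw [hab, Finset.mem_Icc] at hnB'; exact hnB'
      have hb0 : b0 = n := by
        have hm : b0 ∈ B := by rw [hab]; exact Finset.mem_Icc.mpr ⟨by omega, le_rfl⟩
        have := Finset.mem_Icc.mp (hBsub hm); omega
      have ha1 : 1 ≤ a := by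
        have hm : a ∈ B := by rw [hab]; exact Finset.mem_Icc.mpr ⟨le_rfl, by omega⟩
        have := Finset.mem_Icc.mp (hBsub hm); omega
      have hcB := hcard B hB
      have hcard2 : n - a + 1 ≤ 2 := by rw [hab, hb0, Nat.card_Icc] at hcB; omega
      set bb : Bool := decide (a < n) with hbb
      have hps : psize bb = n + 1 - a := by
        by_cases h : a < n
        · have hbt : bb = true := by simp [hbb, h]
          rw [hbt]; show (2:ℕ) = n + 1 - a; omega
        · have hbt : bb = false := by simp [hbb, h]
          rw [hbt]; show (1:ℕ) = n + 1 - a; omega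
      set p := psize bb with hp
      have hpa : p = n + 1 - a := hps
      have hp1 : 1 ≤ p := psize_pos bb
      have hp2 : p ≤ 2 := psize_le bb
      have hB_top : B = topBlock n bb := by
        rw [hab, hb0, topBlock, ← hp]
        have : n + 1 - p = a := by omega
        rw [this]
      have hcov' : (σ.blocks.erase B).sup id = Finset.Icc 1 (n - p) := by
        ext z
        simp only [Finset.mem_sup, Finset.mem_Icc, id]
        constructor
        · rintro ⟨C, hC, hzC⟩
          have hCb : C ∈ σ.blocks := Finset.mem_of_mem_erase hC
          have hne : C ≠ B := Finset.ne_of_mem_erase hC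
          have h1' : z ∈ Finset.Icc 1 n := by
            have hsub : C ⊆ σ.blocks.sup id := Finset.le_sup (f := id) hCb
            rw [← σ.cover]; exact hsub hzC
          rw [Finset.mem_Icc] at h1'
          have hzB : z ∉ B := by
            intro hzB
            exact (Finset.disjoint_left.mp (σ.disj C hCb B hB hne)) hzC hzB
          have hza : ¬ (a ≤ z ∧ z ≤ n) := by
            intro hh; exact hzB (by rw [hab, hb0]; exact Finset.mem_Icc.mpr hh)
          omega
        · rintro ⟨h1', h2'⟩
          have hz : z ∈ σ.blocks.sup id := by
            rw [σ.cover]; exact Finset.mem_Icc.mpr ⟨h1', by omega⟩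
          obtain ⟨C, hC, hzC⟩ := Finset.mem_sup.mp hz
          refine ⟨C, Finset.mem_erase.mpr ⟨?_, hC⟩, hzC⟩
          intro hCB
          simp only [id_eq] at hzC
          rw [hCB, hab, hb0, Finset.mem_Icc] at hzC
          omega
      obtain ⟨c', hc', hbl'⟩ := ih (n - p) (by omega)
        ⟨σ.blocks.erase B,
         fun C hC => σ.nonempty_mem C (Finset.mem_of_mem_erase hC),
         fun C hC D hD h => σ.disj C (Finset.mem_of_mem_erase hC) D (Finset.mem_of_mem_erase hD) h,
         hcov'⟩
        (fun C hC => hlay C (Finset.mem_of_mem_erase hC))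
        (fun C hC => hcard C (Finset.mem_of_mem_erase hC))
      refine ⟨bb :: c', by rw [csum_cons]; omega, ?_⟩
      rw [blocksAux, ← hp, hbl', ← hB_top, Finset.insert_erase hB]

lemma mem_topBlock_self (n : ℕ) (b : Bool) (hn : 1 ≤ n) : n ∈ topBlock n b := by
  rw [topBlock, Finset.mem_Icc]; have := psize_pos b; omega

lemma topBlock_not_mem_blocksAux {c : List Bool} {n m : ℕ} {b : Bool}
    (hc : csum c ≤ m) (hm : m < n) (hn : 1 ≤ n) : topBlock n b ∉ blocksAux m c := by
  intro h
  have := mem_blocksAux hc h n (mem_topBlock_self n b hn)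
  omega

lemma word_inj : ∀ (c₁ c₂ : List Bool) (n : ℕ), csum c₁ = n → csum c₂ = n →
    wordAux n c₁ = wordAux n c₂ → c₁ = c₂ := by
  intro c₁
  induction c₁ with
  | nil =>
    intro c₂ n h1 h2 _
    exact (csum_eq_zero (by rw [h2, ← h1]; rfl)).symm
  | cons b t ih =>
    intro c₂ n h1 h2 hw
    have hb1 := psize_pos b
    rw [csum_cons] at h1
    cases c₂ with
    | nil => rw [show csum ([] : List Bool) = 0 from rfl] at h2; omega
    | cons b' t' =>
      rw [csum_cons] at h2
      have hb2 := psize_pos b'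
      cases b <;> cases b'
      · -- false false
        rw [wordAux, wordAux] at hw
        obtain ⟨-, hw2⟩ := List.cons.inj hw
        rw [ih t' (n-1) (by have : (1:ℕ) + csum t = n := h1; omega)
          (by have : (1:ℕ) + csum t' = n := h2; omega) hw2]
      · -- false true
        rw [wordAux, wordAux] at hw
        obtain ⟨hw1, -⟩ := List.cons.inj hw
        have : (2:ℕ) + csum t' = n := h2
        omega
      · -- true false
        rw [wordAux, wordAux] at hw
        obtain ⟨hw1, -⟩ := List.cons.inj hw
        have : (2:ℕ) + csum t = n := h1
        omega
      · -- true true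
        rw [wordAux, wordAux] at hw
        obtain ⟨-, hw2⟩ := List.cons.inj hw
        obtain ⟨-, hw3⟩ := List.cons.inj hw2
        rw [ih t' (n-2) (by have : (2:ℕ) + csum t = n := h1; omega)
          (by have : (2:ℕ) + csum t' = n := h2; omega) hw3]

lemma blocks_inj : ∀ (c₁ c₂ : List Bool) (n : ℕ), csum c₁ = n → csum c₂ = n →
    blocksAux n c₁ = blocksAux n c₂ → c₁ = c₂ := by
  intro c₁
  induction c₁ with
  | nil =>
    intro c₂ n h1 h2 _
    exact (csum_eq_zero (by rw [h2, ← h1]; rfl)).symm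
  | cons b t ih =>
    intro c₂ n h1 h2 hbl
    have hb1 := psize_pos b
    have hb1' := psize_le b
    rw [csum_cons] at h1
    cases c₂ with
    | nil => rw [show csum ([] : List Bool) = 0 from rfl] at h2; omega
    | cons b' t' =>
      rw [csum_cons] at h2
      have hb2 := psize_pos b'
      have hb2' := psize_le b'
      have hn1 : 1 ≤ n := by omega
      rw [blocksAux, blocksAux] at hbl
      have hbb : b = b' := by
        by_contra hne
        have hmem : topBlock n b ∈ insert (topBlock n b') (blocksAux (n - psize b') t') := by
          rw [← hbl]; exact Finset.mem_insert_self _ _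
        rcases Finset.mem_insert.mp hmem with h | h
        · -- topBlock n b = topBlock n b' with b ≠ b'
          cases b <;> cases b' <;> simp at hne
          · -- b = false, b' = true
            have hnn : 2 ≤ n := by have : (2:ℕ) + csum t' = n := h2; omega
            have hx : (n-1) ∈ topBlock n false := by
              rw [h, topBlock, Finset.mem_Icc]
              show n + 1 - 2 ≤ n - 1 ∧ n - 1 ≤ n
              omega
            rw [topBlock, Finset.mem_Icc] at hx
            revert hx
            show ¬ (n + 1 - 1 ≤ n - 1 ∧ n - 1 ≤ n)
            omega
          · -- b = true, b' = false
            have hnn : 2 ≤ n := by have : (2:ℕ) + csum t = n := h1; omega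
            have hx : (n-1) ∈ topBlock n false := by
              rw [← h, topBlock, Finset.mem_Icc]
              show n + 1 - 2 ≤ n - 1 ∧ n - 1 ≤ n
              omega
            rw [topBlock, Finset.mem_Icc] at hx
            revert hx
            show ¬ (n + 1 - 1 ≤ n - 1 ∧ n - 1 ≤ n)
            omega
        · exact topBlock_not_mem_blocksAux (le_of_eq (by omega)) (by omega) hn1 h
      subst hbb
      have hnm1 : topBlock n b ∉ blocksAux (n - psize b) t :=
        topBlock_not_mem_blocksAux (le_of_eq (by omega)) (by omega) hn1
      have hnm2 : topBlock n b ∉ blocksAux (n - psize b) t' :=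
        topBlock_not_mem_blocksAux (le_of_eq (by omega)) (by omega) hn1
      have htails : blocksAux (n - psize b) t = blocksAux (n - psize b) t' := by
        rw [← Finset.erase_insert hnm1, ← Finset.erase_insert hnm2, hbl]
      rw [ih t' (n - psize b) (by omega) (by omega) htails]

lemma min_lt_min_iff {B C : Finset ℕ} (hB : B.Nonempty) (hC : C.Nonempty) :
    C.min < B.min ↔ C.min' hC < B.min' hB := by
  rw [← Finset.coe_min' hB, ← Finset.coe_min' hC]
  exact_mod_cast Iff.rfl

lemma pos_main : ∀ (c : List Bool) (n : ℕ), csum c = n →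
    ∀ B ∈ blocksAux n c, ∀ C ∈ blocksAux n c, ∀ x ∈ B, ∀ y ∈ C,
      ((x ∈ wordAux n c ∧ y ∈ wordAux n c ∧
          (wordAux n c).idxOf x < (wordAux n c).idxOf y) ↔
        (C.min < B.min ∨ (B = C ∧ x < y))) := by
  intro c
  induction c with
  | nil => intro n h B hB; simp [blocksAux] at hB
  | cons b t ih =>
    intro n hn B hB C hC x hx y hy
    have hp1 := psize_pos b
    have hp2 := psize_le b
    rw [csum_cons] at hn
    set m := n - psize b with hm
    have hmn : m = n - psize b := hm
    have hct : csum t = m := by omega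
    have hct' : csum t ≤ m := le_of_eq hct
    have hn1 : 1 ≤ n := by omega
    have h0 : csum (b :: t) = n := by rw [csum_cons]; omega
    have hTne : (topBlock n b).Nonempty := by
      rw [topBlock]; exact Finset.nonempty_Icc.mpr (by omega)
    have hTmem : ∀ z, z ∈ topBlock n b ↔ m < z ∧ z ≤ n := by
      intro z; rw [topBlock, Finset.mem_Icc]; omega
    have hTmin : (topBlock n b).min' hTne = m + 1 := by
      refine le_antisymm (Finset.min'_le _ _ ((hTmem _).mpr ⟨by omega, by omega⟩)) ?_
      exact Finset.le_min' _ _ _ (fun z hz => by have := (hTmem z).mp hz; omega)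
    have hwmem : ∀ z, z ∈ wordAux n (b :: t) ↔ 0 < z ∧ z ≤ n := by
      intro z
      rw [mem_wordAux (le_of_eq h0), h0]
      omega
    have hidx_top : ∀ z, m < z → z ≤ n →
        List.idxOf z (wordAux n (b :: t)) = z - (m + 1) := by
      intro z h1 h2
      cases b with
      | false =>
        have hz : z = n := by simp [psize] at hmn; omega
        rw [wordAux, hz, List.idxOf_cons_self]
        simp [psize] at hmn; omega
      | true =>
        have hmn' : m = n - 2 := hmn
        have hn2 : 2 ≤ n := by have : (2:ℕ) + csum t = n := hn; omega
        rw [wordAux]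
        rcases (by omega : z = n - 1 ∨ z = n) with hz | hz
        · rw [hz, List.idxOf_cons_self]; omega
        · rw [hz, List.idxOf_cons_ne _ (by omega : n - 1 ≠ n),
            List.idxOf_cons_self]
          omega
    have hidx_rest : ∀ z, z ∈ wordAux m t →
        List.idxOf z (wordAux n (b :: t)) = psize b + List.idxOf z (wordAux m t) := by
      intro z hz
      have hzb := (mem_wordAux hct').mp hz
      cases b with
      | false =>
        have hmn' : m = n - 1 := hmn
        rw [wordAux, List.idxOf_cons_ne _ (by omega : n ≠ z)]
        show _ = 1 + _
        have : n - 1 = m := by omega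
        rw [this]; omega
      | true =>
        have hmn' : m = n - 2 := hmn
        have hn2 : 2 ≤ n := by omega
        rw [wordAux, List.idxOf_cons_ne _ (by omega : n - 1 ≠ z),
          List.idxOf_cons_ne _ (by omega : n ≠ z)]
        show _ = 2 + _
        have : n - 2 = m := by omega
        rw [this]; omega
    rw [blocksAux, Finset.mem_insert] at hB hC
    rcases hB with rfl | hB <;> rcases hC with rfl | hC
    · -- both top block
      have hxb := (hTmem x).mp hx
      have hyb := (hTmem y).mp hy
      rw [hidx_top x hxb.1 hxb.2, hidx_top y hyb.1 hyb.2]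
      constructor
      · rintro ⟨-, -, hlt⟩
        exact Or.inr ⟨rfl, by omega⟩
      · rintro (hlt | ⟨-, hlt⟩)
        · rw [min_lt_min_iff hTne hTne] at hlt
          omega
        · exact ⟨(hwmem x).mpr ⟨by omega, hxb.2⟩, (hwmem y).mpr ⟨by omega, hyb.2⟩,
            by omega⟩
    · -- B top, C rest
      have hxb := (hTmem x).mp hx
      have hyb := mem_blocksAux hct' hC y hy
      have hyw : y ∈ wordAux m t := (mem_wordAux hct').mpr hyb
      have hCne : C.Nonempty := ⟨y, hy⟩
      refine iff_of_true ⟨(hwmem x).mpr ⟨by omega, hxb.2⟩,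
        (hwmem y).mpr ⟨by omega, by omega⟩, ?_⟩ (Or.inl ?_)
      · rw [hidx_top x hxb.1 hxb.2, hidx_rest y hyw]
        omega
      · rw [min_lt_min_iff hTne hCne, hTmin]
        have := mem_blocksAux hct' hC _ (Finset.min'_mem C hCne)
        omega
    · -- B rest, C top
      have hyb := (hTmem y).mp hy
      have hxb := mem_blocksAux hct' hB x hx
      have hxw : x ∈ wordAux m t := (mem_wordAux hct').mpr hxb
      have hBne : B.Nonempty := ⟨x, hx⟩
      refine iff_of_false ?_ ?_
      · rintro ⟨-, -, hlt⟩
        rw [hidx_top y hyb.1 hyb.2, hidx_rest x hxw] at hlt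
        omega
      · rintro (hlt | ⟨hBC, -⟩)
        · rw [min_lt_min_iff hBne hTne, hTmin] at hlt
          have := mem_blocksAux hct' hB _ (Finset.min'_mem B hBne)
          omega
        · rw [hBC] at hx
          have := (hTmem x).mp hx
          omega
    · -- both rest
      have hxb := mem_blocksAux hct' hB x hx
      have hyb := mem_blocksAux hct' hC y hy
      have hxw : x ∈ wordAux m t := (mem_wordAux hct').mpr hxb
      have hyw : y ∈ wordAux m t := (mem_wordAux hct').mpr hyb
      rw [← ih m hct B hB C hC x hx y hy]
      constructor
      · rintro ⟨-, -, hlt⟩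
        rw [hidx_rest x hxw, hidx_rest y hyw] at hlt
        exact ⟨hxw, hyw, by omega⟩
      · rintro ⟨-, -, hlt⟩
        refine ⟨(hwmem x).mpr ⟨by omega, by omega⟩, (hwmem y).mpr ⟨by omega, by omega⟩, ?_⟩
        rw [hidx_rest x hxw, hidx_rest y hyw]
        omega

lemma indexOf_get_self {w : List ℕ} (hnd : w.Nodup) (i : Fin w.length) :
    List.idxOf (w.get i) w = (i : ℕ) := by
  have hm : w.get i ∈ w := List.get_mem w i
  have hlt : List.idxOf (w.get i) w < w.length := List.idxOf_lt_length_iff.mpr hm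
  have h1 : w.get ⟨List.idxOf (w.get i) w, hlt⟩ = w.get i := List.idxOf_get hlt
  have h2 := (hnd.get_inj_iff).mp h1
  exact congrArg Fin.val h2

lemma before_iff {w : List ℕ} (hnd : w.Nodup) {x y : ℕ} :
    (∃ i j : Fin w.length, i < j ∧ w.get i = x ∧ w.get j = y) ↔
      (x ∈ w ∧ y ∈ w ∧ List.idxOf x w < List.idxOf y w) := by
  constructor
  · rintro ⟨i, j, hij, rfl, rfl⟩
    refine ⟨List.get_mem w i, List.get_mem w j, ?_⟩
    rw [indexOf_get_self hnd, indexOf_get_self hnd]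
    exact hij
  · rintro ⟨hx, hy, hlt⟩
    have hxl := List.idxOf_lt_length_iff.mpr hx
    have hyl := List.idxOf_lt_length_iff.mpr hy
    exact ⟨⟨_, hxl⟩, ⟨_, hyl⟩, hlt, List.idxOf_get hxl, List.idxOf_get hyl⟩

lemma SetPartition.blocks_ext {n : ℕ} {σ τ : SetPartition n} (h : σ.blocks = τ.blocks) :
    σ = τ := by
  cases σ; cases τ; simpa using h

theorem stmt7 (n : ℕ) :
    ∃ Φ : {σ : SetPartition n // σ.Layered ∧ ∀ B ∈ σ.blocks, B.card ≤ 2} →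
        {w : List ℕ // w.Nodup ∧ w.toFinset = Finset.Icc 1 n ∧
          AvoidsWord w [1, 2, 3] ∧ AvoidsWord w [1, 3, 2] ∧ AvoidsWord w [2, 1, 3]},
      Function.Bijective Φ ∧
      ∀ σ : {σ : SetPartition n // σ.Layered ∧ ∀ B ∈ σ.blocks, B.card ≤ 2},
        ∀ B ∈ σ.1.blocks, ∀ C ∈ σ.1.blocks, ∀ x ∈ B, ∀ y ∈ C,
          ((∃ i j : Fin (Φ σ).1.length, i < j ∧ (Φ σ).1.get i = x ∧ (Φ σ).1.get j = y)
            ↔ (C.min < B.min ∨ (B = C ∧ x < y))) := by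
  classical
  let F : {c : List Bool // csum c = n} →
      {σ : SetPartition n // σ.Layered ∧ ∀ B ∈ σ.blocks, B.card ≤ 2} :=
    fun c => ⟨⟨blocksAux n c.1,
      fun B hB => blocksAux_nonempty (le_of_eq c.2) hB,
      fun B hB C hC h => blocksAux_disj (le_of_eq c.2) hB hC h,
      by rw [blocksAux_sup (le_of_eq c.2), c.2]; congr 1; omega⟩,
      fun B hB => blocksAux_layered hB,
      fun B hB => blocksAux_card (le_of_eq c.2) hB⟩
  let G : {c : List Bool // csum c = n} →
      {w : List ℕ // w.Nodup ∧ w.toFinset = Finset.Icc 1 n ∧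
        AvoidsWord w [1, 2, 3] ∧ AvoidsWord w [1, 3, 2] ∧ AvoidsWord w [2, 1, 3]} :=
    fun c => ⟨wordAux n c.1, nodup_wordAux (le_of_eq c.2),
      by ext z; rw [List.mem_toFinset, mem_wordAux (le_of_eq c.2), c.2, Finset.mem_Icc]; omega,
      (avoids_of_Q (Q_wordAux (le_of_eq c.2))).1,
      (avoids_of_Q (Q_wordAux (le_of_eq c.2))).2.1,
      (avoids_of_Q (Q_wordAux (le_of_eq c.2))).2.2⟩
  have hF : Function.Bijective F := by
    constructor
    · intro c₁ c₂ h
      exact Subtype.ext (blocks_inj c₁.1 c₂.1 n c₁.2 c₂.2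
        (congrArg (fun σ => σ.1.blocks) h))
    · intro σ
      obtain ⟨c, hc, hbl⟩ := blocks_surj n σ.1 σ.2.1 σ.2.2
      exact ⟨⟨c, hc⟩, Subtype.ext (SetPartition.blocks_ext hbl)⟩
  have hG : Function.Bijective G := by
    constructor
    · intro c₁ c₂ h
      exact Subtype.ext (word_inj c₁.1 c₂.1 n c₁.2 c₂.2
        (congrArg (fun w => w.1) h))
    · intro w
      obtain ⟨c, hc, hw⟩ := word_surj n w.1 w.2.1 w.2.2.1
        (Q_of_avoids w.2.1 w.2.2.2.1 w.2.2.2.2.1 w.2.2.2.2.2)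
      exact ⟨⟨c, hc⟩, Subtype.ext hw⟩
  let eF := Equiv.ofBijective F hF
  refine ⟨fun σ => G (eF.symm σ), hG.comp eF.symm.bijective, ?_⟩
  intro σ B hB C hC x hx y hy
  have hFc : F (eF.symm σ) = σ := eF.apply_symm_apply σ
  have hbl : blocksAux n (eF.symm σ).1 = σ.1.blocks :=
    congrArg (fun τ => τ.1.blocks) hFc
  have hB' : B ∈ blocksAux n (eF.symm σ).1 := by rw [hbl]; exact hB
  have hC' : C ∈ blocksAux n (eF.symm σ).1 := by rw [hbl]; exact hC
  have hkey := pos_main (eF.symm σ).1 n (eF.symm σ).2 B hB' C hC' x hx y hy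
  rw [show (G (eF.symm σ)).1 = wordAux n (eF.symm σ).1 from rfl,
    before_iff (nodup_wordAux (le_of_eq (eF.symm σ).2))]
  exact hkey
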